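/- Let ε, ω ∈ ℝ, let f : ℝ → ℝ be any function, and let x, y : ℝ → ℝ be twice differentiable functions satisfying the Liénard equation ẍ(t) + εf(x(t))ẋ(t) + ω²x(t) = 0 and the auxiliary equation ÿ(t) − εf(x(t))ẏ(t) + ω²y(t) = 0 for all t ∈ ℝ. Then the function t ↦ ẋ(t)·ẏ(t) + ω²·x(t)·y(t) is constant on ℝ. -/

import Mathlib

theorem lienard_first_integral
    (ε ω : ℝ) (f : ℝ → ℝ) (x y : ℝ → ℝ)
    (hx : Differentiable ℝ x) (hx' : Differentiable ℝ (deriv x))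
    (hy : Differentiable ℝ y) (hy' : Differentiable ℝ (deriv y))
    (hxeq : ∀ t : ℝ, deriv (deriv x) t + ε * f (x t) * deriv x t + ω ^ 2 * x t = 0)
    (hyeq : ∀ t : ℝ, deriv (deriv y) t - ε * f (x t) * deriv y t + ω ^ 2 * y t = 0) :
    ∃ c : ℝ, ∀ t : ℝ, deriv x t * deriv y t + ω ^ 2 * x t * y t = c := by
  set F : ℝ → ℝ := fun t => deriv x t * deriv y t + ω ^ 2 * x t * y t with hF
  have hFd : Differentiable ℝ F := by
    fun_prop
  have hder : ∀ t : ℝ, deriv F t = 0 := by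
    intro t
    have h1 : HasDerivAt F (deriv (deriv x) t * deriv y t + deriv x t * deriv (deriv y) t
        + ω ^ 2 * (deriv x t * y t + x t * deriv y t)) t := by
      have := (((hx'.differentiableAt.hasDerivAt (x := t)).mul
          (hy'.differentiableAt.hasDerivAt)).add
        (((hx.differentiableAt.hasDerivAt (x := t)).mul
          (hy.differentiableAt.hasDerivAt)).const_mul (ω ^ 2)))
      convert this using 1
      rfl
      rfl
      funext s
      simp [hF]
      ring
    rw [h1.deriv]
    have ex := hxeq t
    have ey := hyeq t
    linear_combination deriv y t * ex + deriv x t * ey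
  use F 0
  intro t
  have : F t = F 0 := by
    have := is_const_of_deriv_eq_zero hFd hder t 0
    exact this
  exact this
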